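/- The function F₄(x,y) = (y²x)/(x²+(x²−y³)²) · x⁴/(x⁴+(x²−y³)²) satisfies |F₄(x,y)| ≤ C·|x|^{1/3} for all (x,y) ∈ ℝ², for some constant C; in particular F₄ extends continuously to ℝ² (with value 0 where x = 0) and restricts to y²/x on the cuspidal cubic {x² = y³} away from the origin. -/

import Mathlib

lemma stmt16_core (v : ℝ) : v^2 ≤ 4*(1+(1-v^3)^2) := by
  nlinarith [sq_nonneg v, sq_nonneg (v-1), sq_nonneg (v^2-1), sq_nonneg (v^3-1),
    sq_nonneg (v^3-2), sq_nonneg (v^2-v)]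

lemma stmt16_key (x y : ℝ) :
    |y ^ 2 * x / (x ^ 2 + (x ^ 2 - y ^ 3) ^ 2) *
      (x ^ 4 / (x ^ 4 + (x ^ 2 - y ^ 3) ^ 2))| ≤ 4 * |x| ^ ((1 : ℝ) / 3) := by
  rcases eq_or_ne x 0 with rfl | hx
  · simp
  · obtain ⟨a, ha, ha3⟩ : ∃ a : ℝ, 0 < a ∧ a ^ 3 = |x| :=
      ⟨|x| ^ ((1:ℝ)/3), Real.rpow_pos_of_pos (abs_pos.mpr hx) _, by
        rw [← Real.rpow_natCast (|x| ^ ((1:ℝ)/3)) 3, ← Real.rpow_mul (abs_nonneg x)]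
        norm_num⟩
    have haeq : |x| ^ ((1:ℝ)/3) = a := by
      rw [← ha3, ← Real.rpow_natCast a 3, ← Real.rpow_mul ha.le]
      norm_num
    set v : ℝ := y / a ^ 2 with hv_def
    have hy : y = v * a ^ 2 := by rw [hv_def, div_mul_cancel₀ y (by positivity)]
    have hx2 : x ^ 2 = a ^ 6 := by rw [← sq_abs x, ← ha3]; ring
    have hnum : |y ^ 2 * x * x ^ 4| = y ^ 2 * |x| * x ^ 4 := by
      rcases le_or_gt 0 x with h | h
      · rw [abs_of_nonneg (by positivity), abs_of_nonneg h]
      · have hx5 : x * x ^ 4 < 0 := mul_neg_of_neg_of_pos h (by positivity)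
        have h0 : y ^ 2 * x * x ^ 4 ≤ 0 := by
          nlinarith [mul_nonpos_of_nonneg_of_nonpos (sq_nonneg y) hx5.le]
        rw [abs_of_nonpos h0, abs_of_neg h]; ring
    have habs : |y ^ 2 * x / (x ^ 2 + (x ^ 2 - y ^ 3) ^ 2) *
        (x ^ 4 / (x ^ 4 + (x ^ 2 - y ^ 3) ^ 2))|
        = y ^ 2 * |x| * x ^ 4 / ((x ^ 2 + (x ^ 2 - y ^ 3) ^ 2) * (x ^ 4 + (x ^ 2 - y ^ 3) ^ 2)) := by
      rw [div_mul_div_comm, abs_div, abs_of_pos (by positivity : (0:ℝ) <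
        (x ^ 2 + (x ^ 2 - y ^ 3) ^ 2) * (x ^ 4 + (x ^ 2 - y ^ 3) ^ 2)), hnum]
    rw [habs, haeq, div_le_iff₀ (by positivity)]
    have hy3 : y ^ 3 = v ^ 3 * a ^ 6 := by rw [hy]; ring
    have hx4 : x ^ 4 = a ^ 12 := by nlinarith [hx2]
    rw [hy3, hx2, hx4, ← ha3, hy]
    set w : ℝ := 1 - v ^ 3 with hw
    calc (v * a ^ 2) ^ 2 * a ^ 3 * a ^ 12 = v ^ 2 * a ^ 19 := by ring
      _ ≤ 4 * (1 + w ^ 2) * a ^ 19 := by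
            have h1 := stmt16_core v
            rw [← hw] at h1
            nlinarith [pow_nonneg ha.le 19]
      _ ≤ 4 * a * ((a ^ 6 + (a ^ 6 - v ^ 3 * a ^ 6) ^ 2) * (a ^ 12 + (a ^ 6 - v ^ 3 * a ^ 6) ^ 2)) := by
            have hexp : 4 * a * ((a ^ 6 + (a ^ 6 - v ^ 3 * a ^ 6) ^ 2) * (a ^ 12 + (a ^ 6 - v ^ 3 * a ^ 6) ^ 2))
                = 4 * (1 + w ^ 2) * a ^ 19 + 4 * a ^ 25 * w ^ 2 * (1 + w ^ 2) := by
              rw [hw]; ring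
            rw [hexp]
            nlinarith [mul_nonneg (mul_nonneg (pow_nonneg ha.le 25) (sq_nonneg w))
              (by positivity : (0:ℝ) ≤ 1 + w ^ 2)]

lemma stmt16_cont : Continuous (fun p : ℝ × ℝ =>
      p.2 ^ 2 * p.1 / (p.1 ^ 2 + (p.1 ^ 2 - p.2 ^ 3) ^ 2) *
        (p.1 ^ 4 / (p.1 ^ 4 + (p.1 ^ 2 - p.2 ^ 3) ^ 2))) := by
  rw [continuous_iff_continuousAt]
  intro p
  by_cases hp : p = (0, 0)
  · subst hp
    rw [ContinuousAt]
    norm_num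
    have hg : Filter.Tendsto (fun p : ℝ × ℝ => 4 * |p.1| ^ ((1:ℝ)/3)) (nhds (0, 0)) (nhds 0) := by
      have : Filter.Tendsto (fun p : ℝ × ℝ => |p.1|) (nhds ((0:ℝ), (0:ℝ))) (nhds 0) := by
        have := (continuous_fst.abs (X := ℝ × ℝ)).tendsto ((0:ℝ), (0:ℝ))
        simpa using this
      have hr : Filter.Tendsto (fun t : ℝ => 4 * t ^ ((1:ℝ)/3)) (nhds 0) (nhds 0) := by
        have := (Real.continuousAt_rpow_const 0 ((1:ℝ)/3) (Or.inr (by norm_num))).tendsto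
        have h2 := this.const_mul 4
        simpa using h2
      exact hr.comp this
    refine squeeze_zero_norm (fun p => ?_) hg
    simpa only [Real.norm_eq_abs] using stmt16_key p.1 p.2
  · have h1 : p.1 ^ 2 + (p.1 ^ 2 - p.2 ^ 3) ^ 2 ≠ 0 := by
      rcases eq_or_ne p.1 0 with h | h
      · have h2 : p.2 ≠ 0 := by
          intro h2; exact hp (Prod.ext h h2)
        have h6 : (0:ℝ) < p.2 ^ 6 := by positivity
        rw [h]; intro hc; nlinarith
      · positivity
    have h2 : p.1 ^ 4 + (p.1 ^ 2 - p.2 ^ 3) ^ 2 ≠ 0 := by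
      rcases eq_or_ne p.1 0 with h | h
      · have h2 : p.2 ≠ 0 := by
          intro h2; exact hp (Prod.ext h h2)
        have h6 : (0:ℝ) < p.2 ^ 6 := by positivity
        rw [h]; intro hc; nlinarith
      · positivity
    exact ((((continuous_snd.pow 2).mul continuous_fst).continuousAt.div
        (by fun_prop) h1).mul
      ((continuous_fst.pow 4).continuousAt.div (by fun_prop) h2))

theorem stmt16 :
    ∃ C : ℝ,
      (∀ x y : ℝ,
        |y ^ 2 * x / (x ^ 2 + (x ^ 2 - y ^ 3) ^ 2) *
          (x ^ 4 / (x ^ 4 + (x ^ 2 - y ^ 3) ^ 2))| ≤ C * |x| ^ ((1 : ℝ) / 3)) ∧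
      Continuous (fun p : ℝ × ℝ =>
        p.2 ^ 2 * p.1 / (p.1 ^ 2 + (p.1 ^ 2 - p.2 ^ 3) ^ 2) *
          (p.1 ^ 4 / (p.1 ^ 4 + (p.1 ^ 2 - p.2 ^ 3) ^ 2))) ∧
      (∀ y : ℝ,
        y ^ 2 * (0 : ℝ) / ((0 : ℝ) ^ 2 + ((0 : ℝ) ^ 2 - y ^ 3) ^ 2) *
          ((0 : ℝ) ^ 4 / ((0 : ℝ) ^ 4 + ((0 : ℝ) ^ 2 - y ^ 3) ^ 2)) = 0) ∧
      ∀ x y : ℝ, x ^ 2 = y ^ 3 → x ≠ 0 →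
        y ^ 2 * x / (x ^ 2 + (x ^ 2 - y ^ 3) ^ 2) *
          (x ^ 4 / (x ^ 4 + (x ^ 2 - y ^ 3) ^ 2)) = y ^ 2 / x := by
  refine ⟨4, stmt16_key, stmt16_cont, fun y => by norm_num, fun x y h hx => ?_⟩
  have hz : x ^ 2 - y ^ 3 = 0 := by rw [h]; ring
  rw [hz]
  have hx4 : x ^ 4 ≠ 0 := pow_ne_zero 4 hx
  have hx2 : x ^ 2 ≠ 0 := pow_ne_zero 2 hx
  field_simp
  ring
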